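/- Let φ: ℝ → ℝ be twice differentiable at 0, and let (φ_n) be functions satisfying n·φ(θ) + u(θ) ≤ φ_n(θ) ≤ n·φ(θ) + v(θ) for all θ and n, where u, v: ℝ → ℝ are functions with u(θ) → 0 and v(θ) → 0 as θ → 0. Then for every δ ∈ ℝ, lim_{n→∞} [φ_n(δ/√n) - δ√n·φ'(0)] = (δ²/2)·φ''(0), provided φ(0) = 0. -/

import Mathlib

open Filter

theorem cgf_clt_limit
    (φ : ℝ → ℝ) (hφ0 : φ 0 = 0)
    (hφdiff : Differentiable ℝ φ)
    (hφdiff2 : DifferentiableAt ℝ (deriv φ) 0)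
    (u v : ℝ → ℝ)
    (hu : Tendsto u (nhds 0) (nhds 0)) (hv : Tendsto v (nhds 0) (nhds 0))
    (φn : ℕ → ℝ → ℝ)
    (hsandwich : ∀ n : ℕ, ∀ θ : ℝ,
      (n : ℝ) * φ θ + u θ ≤ φn n θ ∧ φn n θ ≤ (n : ℝ) * φ θ + v θ)
    (δ : ℝ) :
    Tendsto
      (fun n : ℕ => φn n (δ / Real.sqrt n) - δ * Real.sqrt n * deriv φ 0)
      atTop (nhds (δ ^ 2 / 2 * deriv (deriv φ) 0)) := by
  set a := deriv φ 0 with ha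
  set c := deriv (deriv φ) 0 with hc
  set g : ℝ → ℝ := fun t => φ t - t * a - t ^ 2 * (c / 2) with hgdef
  have hg0 : g 0 = 0 := by simp [hgdef, hφ0]
  -- derivative of g
  have hgd : ∀ t : ℝ, HasDerivAt g (deriv φ t - a - t * c) t := by
    intro t
    have h1 : HasDerivAt φ (deriv φ t) t := (hφdiff t).hasDerivAt
    have h2 : HasDerivAt (fun s : ℝ => s * a) (1 * a) t := (hasDerivAt_id t).mul_const a
    have h3 : HasDerivAt (fun s : ℝ => s ^ 2 * (c / 2))
        ((2 : ℕ) * t ^ (2 - 1) * (c / 2)) t := (hasDerivAt_pow 2 t).mul_const (c / 2)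
    have := (h1.sub h2).sub h3
    refine this.congr_deriv ?_
    norm_num
    ring
  -- g'(t)/t tends to 0 etc.
  have hslope : Tendsto (fun t : ℝ => (deriv φ t - a) / t) (nhdsWithin 0 {(0:ℝ)}ᶜ) (nhds c) := by
    have := hasDerivAt_iff_tendsto_slope.1 hφdiff2.hasDerivAt
    refine this.congr (fun t => ?_)
    simp [slope_def_field, div_eq_mul_inv, ha, mul_comm]
  -- L'Hopital: g(t)/t² → c' where c' = 0
  have hratio : Tendsto (fun t : ℝ => g t / t ^ 2) (nhdsWithin 0 {(0:ℝ)}ᶜ) (nhds 0) := by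
    apply HasDerivAt.lhopital_zero_nhdsNE
      (f' := fun t => deriv φ t - a - t * c) (g' := fun t => 2 * t)
    · exact Eventually.of_forall hgd
    · refine Eventually.of_forall (fun t => ?_)
      have := (hasDerivAt_pow 2 t)
      refine this.congr_deriv ?_
      norm_num
    · filter_upwards [self_mem_nhdsWithin] with t ht
      have ht' : t ≠ 0 := ht
      simp [ht']
    · have hgc : Continuous g := by
        have : Differentiable ℝ g := fun t => (hgd t).differentiableAt
        exact this.continuous
      have h := (hgc.tendsto (0:ℝ))
      rw [hg0] at h
      exact tendsto_nhdsWithin_of_tendsto_nhds h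
    · have h : Tendsto (fun t : ℝ => t ^ 2) (nhds (0:ℝ)) (nhds 0) := by
        simpa using (continuous_pow 2).tendsto (0:ℝ)
      exact tendsto_nhdsWithin_of_tendsto_nhds h
    · have h : Tendsto (fun t : ℝ => ((deriv φ t - a) / t - c) / 2)
          (nhdsWithin 0 {(0:ℝ)}ᶜ) (nhds 0) := by
        have := (hslope.sub_const c).div_const 2
        simpa using this
      refine h.congr' ?_
      filter_upwards [self_mem_nhdsWithin] with t ht
      have ht' : t ≠ 0 := ht
      field_simp
  have hratio' : Tendsto (fun t : ℝ => g t / t ^ 2) (nhds 0) (nhds 0) := by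
    nth_rewrite 1 [← nhdsNE_sup_pure (0:ℝ)]
    rw [tendsto_sup]
    refine ⟨hratio, ?_⟩
    have h := tendsto_pure_nhds (fun t : ℝ => g t / t ^ 2) 0
    rw [hg0] at h
    simpa using h
  -- sequence t n
  set t : ℕ → ℝ := fun n => δ / Real.sqrt n with htdef
  have hsqrtR : Tendsto Real.sqrt atTop atTop := by
    apply tendsto_atTop_atTop_of_monotone
    · exact fun x y h => Real.sqrt_le_sqrt h
    · intro b
      exact ⟨b ^ 2, by rw [Real.sqrt_sq_eq_abs]; exact le_abs_self b⟩
  have hsqrt : Tendsto (fun n : ℕ => Real.sqrt n) atTop atTop :=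
    hsqrtR.comp tendsto_natCast_atTop_atTop
  have ht : Tendsto t atTop (nhds 0) := Tendsto.div_atTop tendsto_const_nhds hsqrt
  -- key identity
  have h_id : ∀ n : ℕ, (n : ℝ) * g (t n) = δ ^ 2 * (g (t n) / (t n) ^ 2) := by
    intro n
    by_cases h : t n = 0
    · rw [h, hg0]; simp
    · have hs : Real.sqrt n ≠ 0 := by
        intro hs0; apply h; simp [htdef, hs0]
      have hn : (n : ℝ) ≠ 0 := by
        intro h0
        apply hs
        rw [h0, Real.sqrt_zero]
      have hsq : (t n) ^ 2 = δ ^ 2 / n := by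
        rw [htdef]
        rw [div_pow, Real.sq_sqrt (Nat.cast_nonneg n)]
      have hδ : δ ≠ 0 := by
        intro h0; apply h; simp [htdef, h0]
      rw [hsq, div_div_eq_mul_div]
      field_simp
  have hL : Tendsto (fun n : ℕ => (n : ℝ) * g (t n)) atTop (nhds 0) := by
    have h1 : Tendsto (fun n : ℕ => δ ^ 2 * (g (t n) / (t n) ^ 2)) atTop (nhds (δ ^ 2 * 0)) :=
      (hratio'.comp ht).const_mul (δ ^ 2)
    rw [mul_zero] at h1
    exact h1.congr (fun n => (h_id n).symm)
  have huc : Tendsto (fun n : ℕ => u (t n)) atTop (nhds 0) := hu.comp ht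
  have hvc : Tendsto (fun n : ℕ => v (t n)) atTop (nhds 0) := hv.comp ht
  -- eventual identity for the bounds
  have hnt : ∀ n : ℕ, 1 ≤ n →
      (n : ℝ) * φ (t n) - δ * Real.sqrt n * a
        = (n : ℝ) * g (t n) + δ ^ 2 / 2 * c := by
    intro n hn
    have hnpos : (0:ℝ) < n := by exact_mod_cast hn
    have hs : Real.sqrt n ≠ 0 := by positivity
    have hss : Real.sqrt n * Real.sqrt n = (n : ℝ) := Real.mul_self_sqrt (Nat.cast_nonneg n)
    have hsq : (t n) ^ 2 = δ ^ 2 / n := by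
      rw [htdef, div_pow, Real.sq_sqrt (Nat.cast_nonneg n)]
    have hlin : (n : ℝ) * t n = δ * Real.sqrt n := by
      rw [htdef]
      field_simp
      linear_combination (-δ) * hss
    simp only [hgdef]
    rw [hsq]
    have : (n:ℝ) * (φ (t n) - t n * a - δ ^ 2 / n * (c / 2))
        = (n:ℝ) * φ (t n) - ((n:ℝ) * t n) * a - δ ^ 2 * (c/2) := by
      field_simp
    rw [this, hlin]
    ring
  -- squeeze
  have hlow : Tendsto (fun n : ℕ => (n : ℝ) * g (t n) + δ ^ 2 / 2 * c + u (t n))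
      atTop (nhds (δ ^ 2 / 2 * c)) := by
    have h1 : Tendsto (fun n : ℕ => (n : ℝ) * g (t n) + δ ^ 2 / 2 * c) atTop
        (nhds (0 + δ ^ 2 / 2 * c)) := hL.add tendsto_const_nhds
    have h2 := h1.add huc
    simpa using h2
  have hhigh : Tendsto (fun n : ℕ => (n : ℝ) * g (t n) + δ ^ 2 / 2 * c + v (t n))
      atTop (nhds (δ ^ 2 / 2 * c)) := by
    have h1 : Tendsto (fun n : ℕ => (n : ℝ) * g (t n) + δ ^ 2 / 2 * c) atTop
        (nhds (0 + δ ^ 2 / 2 * c)) := hL.add tendsto_const_nhds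
    have h2 := h1.add hvc
    simpa using h2
  refine tendsto_of_tendsto_of_tendsto_of_le_of_le' hlow hhigh ?_ ?_
  · filter_upwards [eventually_ge_atTop 1] with n hn
    have h1 := (hsandwich n (t n)).1
    have h2 := hnt n hn
    have : (n : ℝ) * φ (t n) + u (t n) - δ * Real.sqrt n * a
        = (n : ℝ) * g (t n) + δ ^ 2 / 2 * c + u (t n) := by linarith
    rw [← this]
    simp only [htdef] at h1 ⊢
    linarith
  · filter_upwards [eventually_ge_atTop 1] with n hn
    have h1 := (hsandwich n (t n)).2
    have h2 := hnt n hn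
    have : (n : ℝ) * φ (t n) + v (t n) - δ * Real.sqrt n * a
        = (n : ℝ) * g (t n) + δ ^ 2 / 2 * c + v (t n) := by linarith
    rw [← this]
    simp only [htdef] at h1 ⊢
    linarith
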